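/- For all n, k ≥ 0 with n ≥ 2k+1, we have (k+1) · b_{n,k}(231) = 2^{n−2k−1} · C(n−1, 2k) · C(2k, k), where b_{n,k}(231) is the number of permutations in S_n(231) with exactly k big descents. -/

import Mathlib

open scoped Classical

/-- A permutation `π` of `Fin n` contains the pattern `σ` (a permutation of `Fin m`)
if some subsequence of the one-line notation of `π` standardizes to `σ`. -/
def Contains {n m : ℕ} (π : Equiv.Perm (Fin n)) (σ : Equiv.Perm (Fin m)) : Prop :=
  ∃ f : Fin m → Fin n, StrictMono f ∧ ∀ a b : Fin m, σ a < σ b ↔ π (f a) < π (f b)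

/-- `π` avoids the pattern `σ`. -/
def Avoids {n m : ℕ} (π : Equiv.Perm (Fin n)) (σ : Equiv.Perm (Fin m)) : Prop :=
  ¬ Contains π σ

/-- The pattern 123 (identity, in 0-indexed one-line notation `[0,1,2]`). -/
def perm123 : Equiv.Perm (Fin 3) := 1

/-- The pattern 132 (0-indexed one-line notation `[0,2,1]`). -/
def perm132 : Equiv.Perm (Fin 3) := ⟨![0, 2, 1], ![0, 2, 1], by decide, by decide⟩

/-- The pattern 213 (0-indexed one-line notation `[1,0,2]`). -/
def perm213 : Equiv.Perm (Fin 3) := ⟨![1, 0, 2], ![1, 0, 2], by decide, by decide⟩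

/-- The pattern 231 (0-indexed one-line notation `[1,2,0]`). -/
def perm231 : Equiv.Perm (Fin 3) := ⟨![1, 2, 0], ![2, 0, 1], by decide, by decide⟩

/-- The pattern 312 (0-indexed one-line notation `[2,0,1]`). -/
def perm312 : Equiv.Perm (Fin 3) := ⟨![2, 0, 1], ![1, 2, 0], by decide, by decide⟩

/-- The pattern 321 (0-indexed one-line notation `[2,1,0]`). -/
def perm321 : Equiv.Perm (Fin 3) := ⟨![2, 1, 0], ![2, 1, 0], by decide, by decide⟩

/-- The number of big descents of `π`: 0-indexed positions `k` with `π k > π (k+1) + 1`. -/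
def bdes {n : ℕ} (π : Equiv.Perm (Fin n)) : ℕ :=
  ((Finset.range n).filter fun k =>
    ∃ hk : k + 1 < n, (π ⟨k + 1, hk⟩ : ℕ) + 1 < (π ⟨k, Nat.lt_of_succ_lt hk⟩ : ℕ)).card

namespace BD231

/-- list contains an occurrence of pattern 231 -/
def LCont (l : List ℕ) : Prop := ∃ a b c : ℕ, [a, b, c].Sublist l ∧ c < a ∧ a < b

def LAv (l : List ℕ) : Prop := ¬ LCont l

def lbdes : List ℕ → ℕ
  | x :: y :: t => (if y + 1 < x then 1 else 0) + lbdes (y :: t)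
  | _ => 0

def hstat (l : List ℕ) : ℕ := if l.head? = some (l.length - 1) ∨ l = [] then 0 else 1

def wstat (l : List ℕ) : ℕ := lbdes l + hstat l

def lperm (n : ℕ) : Finset (List ℕ) := (List.range n).permutations.toFinset

noncomputable def Bf (n k : ℕ) : ℕ := ((lperm n).filter fun l => LAv l ∧ lbdes l = k).card
noncomputable def Wf (n k : ℕ) : ℕ := ((lperm n).filter fun l => LAv l ∧ wstat l = k).card
noncomputable def Cf (n k : ℕ) : ℕ :=
  ((lperm n).filter fun l => LAv l ∧ lbdes l = k ∧ l.head? = some (n - 1)).card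
noncomputable def Df (n k : ℕ) : ℕ :=
  ((lperm n).filter fun l => LAv l ∧ lbdes l = k ∧ l.head? ≠ some (n - 1)).card

lemma mem_lperm {n : ℕ} {l : List ℕ} : l ∈ lperm n ↔ l.Perm (List.range n) := by
  simp [lperm, List.mem_permutations]

lemma length_of_mem_lperm {n : ℕ} {l : List ℕ} (h : l ∈ lperm n) : l.length = n := by
  simpa using (mem_lperm.1 h).length_eq

lemma nodup_of_mem_lperm {n : ℕ} {l : List ℕ} (h : l ∈ lperm n) : l.Nodup :=
  (mem_lperm.1 h).nodup_iff.2 List.nodup_range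

lemma mem_iff_lt_of_mem_lperm {n : ℕ} {l : List ℕ} (h : l ∈ lperm n) {x : ℕ} :
    x ∈ l ↔ x < n := by
  rw [(mem_lperm.1 h).mem_iff, List.mem_range]

lemma lbdes_nil : lbdes [] = 0 := rfl
lemma lbdes_singleton (x : ℕ) : lbdes [x] = 0 := rfl
lemma lbdes_cons_cons (x y : ℕ) (t : List ℕ) :
    lbdes (x :: y :: t) = (if y + 1 < x then 1 else 0) + lbdes (y :: t) := rfl

lemma lbdes_cons (x : ℕ) (t : List ℕ) :
    lbdes (x :: t) = (match t.head? with
      | some y => if y + 1 < x then 1 else 0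
      | none => 0) + lbdes t := by
  cases t with
  | nil => rfl
  | cons y t => rfl

lemma lbdes_append : ∀ (α : List ℕ) (y : ℕ) (β : List ℕ),
    lbdes (α ++ y :: β) = lbdes α + (match α.getLast? with
      | some x => if y + 1 < x then 1 else 0
      | none => 0) + lbdes (y :: β)
  | [], y, β => by simp [lbdes]
  | [x], y, β => by
      simp only [List.cons_append, List.nil_append, lbdes_cons_cons, lbdes_singleton,
        List.getLast?_singleton]
      omega
  | x :: x' :: α', y, β => by
      have IH := lbdes_append (x' :: α') y β
      simp only [List.cons_append] at IH ⊢
      rw [lbdes_cons_cons, IH, lbdes_cons_cons, List.getLast?_cons_cons]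
      omega

lemma lbdes_map_add (a : ℕ) : ∀ β : List ℕ, lbdes (β.map (· + a)) = lbdes β
  | [] => rfl
  | [x] => rfl
  | x :: y :: t => by
      have IH := lbdes_map_add a (y :: t)
      simp only [List.map_cons] at IH ⊢
      rw [lbdes_cons_cons, lbdes_cons_cons, IH]
      congr 1
      exact if_congr (by omega) rfl rfl

lemma lbdes_map_sub (a : ℕ) : ∀ β : List ℕ, (∀ y ∈ β, a ≤ y) →
    lbdes (β.map (· - a)) = lbdes β
  | [], _ => rfl
  | [x], _ => rfl
  | x :: y :: t, h => by
      have IH := lbdes_map_sub a (y :: t) (fun z hz => h z (List.mem_cons_of_mem _ hz))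
      have hx : a ≤ x := h x (by simp)
      have hy : a ≤ y := h y (by simp)
      simp only [List.map_cons] at IH ⊢
      rw [lbdes_cons_cons, lbdes_cons_cons, IH]
      congr 1
      exact if_congr (by omega) rfl rfl

lemma LAv_sublist {l l' : List ℕ} (h : l.Sublist l') (h' : LAv l') : LAv l := by
  rintro ⟨a, b, c, hs, h1, h2⟩
  exact h' ⟨a, b, c, hs.trans h, h1, h2⟩

lemma LAv_cons_max {m : ℕ} {β : List ℕ} (h : ∀ y ∈ β, y < m) :
    LAv (m :: β) ↔ LAv β := by
  constructor
  · exact fun h' => LAv_sublist (List.sublist_cons_self m β) h'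
  · rintro hβ ⟨a, b, c, hs, h1, h2⟩
    rcases List.sublist_cons_iff.1 hs with hs | ⟨r, hr, hrs⟩
    · exact hβ ⟨a, b, c, hs, h1, h2⟩
    · injection hr with ha hr'
      subst ha hr'
      exact absurd (h b (hrs.subset (by simp))) (by omega)

lemma LAv_decomp {α β : List ℕ} {M : ℕ} (hα : ∀ x ∈ α, x < M) (hβ : ∀ y ∈ β, y < M)
    (hnd : (α ++ M :: β).Nodup) :
    LAv (α ++ M :: β) ↔ LAv α ∧ LAv β ∧ ∀ x ∈ α, ∀ y ∈ β, x < y := by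
  constructor
  · intro h
    refine ⟨LAv_sublist (List.sublist_append_left α (M :: β)) h,
      LAv_sublist ((List.sublist_cons_self M β).trans (List.sublist_append_right α (M :: β))) h,
      fun x hx y hy => ?_⟩
    by_contra hxy
    have hne : x ≠ y := by
      rw [List.nodup_append] at hnd
      exact fun he => hnd.2.2 x hx x (by rw [he]; exact List.mem_cons_of_mem M hy) rfl
    have hyx : y < x := by omega
    refine h ⟨x, M, y, ?_, hyx, hα x hx⟩
    have h1 : [x].Sublist α := List.singleton_sublist.2 hx
    have h2 : [M, y].Sublist (M :: β) :=
      List.Sublist.cons₂ M (List.singleton_sublist.2 hy)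
    exact h1.append h2
  · rintro ⟨h1, h2, h3⟩ ⟨a, b, c, hs, hca, hab⟩
    rcases List.sublist_append_iff.1 hs with ⟨u, v, huv, hu, hv⟩
    have hmem : ∀ z (r : List ℕ), (z :: r).Sublist (M :: β) → z = M ∨ z ∈ β := by
      intro z r hzr
      rcases List.sublist_cons_iff.1 hzr with hzr | ⟨r', hr', _⟩
      · exact Or.inr (hzr.subset (by simp))
      · injection hr' with hz _
        exact Or.inl hz
    match u, huv with
    | [], huv =>
      subst huv
      rcases List.sublist_cons_iff.1 hv with hv | ⟨r, hr, hrs⟩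
      · exact h2 ⟨a, b, c, hv, hca, hab⟩
      · injection hr with ha hr'
        subst ha hr'
        have : b ∈ β := hrs.subset (by simp)
        exact absurd (hβ b this) (by omega)
    | [a'], huv =>
      simp only [List.cons_append, List.nil_append, List.cons.injEq] at huv
      obtain ⟨rfl, rfl⟩ := huv
      have haα : a ∈ α := hu.subset (by simp)
      rcases List.sublist_cons_iff.1 hv with hv | ⟨r, hr, hrs⟩
      · have hcβ : c ∈ β := hv.subset (by simp)
        exact absurd (h3 a haα c hcβ) (by omega)
      · injection hr with hb hr'
        subst hb hr'
        have hcβ : c ∈ β := hrs.subset (by simp)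
        exact absurd (h3 a haα c hcβ) (by omega)
    | [a', b'], huv =>
      simp only [List.cons_append, List.nil_append, List.cons.injEq] at huv
      obtain ⟨rfl, rfl, rfl⟩ := huv
      have haα : a ∈ α := hu.subset (by simp)
      rcases hmem c _ hv with rfl | hcβ
      · exact absurd (hα a haα) (by omega)
      · exact absurd (h3 a haα c hcβ) (by omega)
    | a' :: b' :: c' :: u', huv =>
      have hlen := congrArg List.length huv
      simp only [List.length_append, List.length_cons, List.length_nil] at hlen
      have hu0 : u' = [] := List.eq_nil_of_length_eq_zero (by omega)
      have hv0 : v = [] := List.eq_nil_of_length_eq_zero (by omega)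
      subst hu0 hv0
      simp only [List.append_nil] at huv
      exact h1 ⟨a, b, c, by rw [huv]; exact hu, hca, hab⟩


lemma downclosed_eq_range (A : Finset ℕ) (h : ∀ x ∈ A, ∀ y < x, y ∈ A) :
    A = Finset.range A.card := by
  ext x
  rw [Finset.mem_range]
  constructor
  · intro hx
    have hsub : Finset.range (x + 1) ⊆ A := by
      intro y hy
      rw [Finset.mem_range] at hy
      rcases Nat.lt_succ_iff_lt_or_eq.1 hy with hy | rfl
      · exact h x hx y hy
      · exact hx
    calc x < x + 1 := Nat.lt_succ_self x
      _ = (Finset.range (x + 1)).card := (Finset.card_range _).symm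
      _ ≤ A.card := Finset.card_le_card hsub
  · intro hx
    by_contra hxA
    have hsub : A ⊆ Finset.range x := by
      intro y hy
      rw [Finset.mem_range]
      rcases lt_trichotomy y x with h' | rfl | h'
      · exact h'
      · exact absurd hy hxA
      · exact absurd (h y hy x h') hxA
    have := Finset.card_le_card hsub
    rw [Finset.card_range] at this
    omega

lemma takeWhile_append_cons (p : ℕ → Bool) (y : ℕ) (t : List ℕ) :
    ∀ (α : List ℕ), (∀ x ∈ α, p x = true) → p y = false →
    (α ++ y :: t).takeWhile p = α ∧ (α ++ y :: t).dropWhile p = y :: t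
  | [], _, hy => by simp [List.takeWhile, List.dropWhile, hy]
  | x :: α', h, hy => by
    have hx : p x = true := h x (by simp)
    have IH := takeWhile_append_cons p y t α' (fun z hz => h z (List.mem_cons_of_mem _ hz)) hy
    simp [List.takeWhile_cons, List.dropWhile_cons, hx, IH.1, IH.2]

lemma dropWhile_head?_false (p : ℕ → Bool) :
    ∀ (l : List ℕ) (y : ℕ), (l.dropWhile p).head? = some y → p y = false
  | [], y, h => by simp [List.dropWhile] at h
  | x :: t, y, h => by
    by_cases hx : p x
    · rw [List.dropWhile_cons_of_pos hx] at h
      exact dropWhile_head?_false p t y h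
    · rw [List.dropWhile_cons_of_neg hx, List.head?_cons, Option.some_inj] at h
      subst h
      simpa using hx



lemma toFinset_range (n : ℕ) : (List.range n).toFinset = Finset.range n := by
  ext x; simp

lemma LCont_map_add_iff (a : ℕ) (β : List ℕ) : LCont (β.map (· + a)) ↔ LCont β := by
  constructor
  · rintro ⟨x, y, z, hs, h1, h2⟩
    obtain ⟨l', hl', heq⟩ := List.sublist_map_iff.1 hs
    match l', heq with
    | [x', y', z'], heq =>
      simp only [List.map_cons, List.map_nil, List.cons.injEq, and_true] at heq
      obtain ⟨rfl, rfl, rfl⟩ := heq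
      exact ⟨x', y', z', hl', by omega, by omega⟩
  · rintro ⟨x, y, z, hs, h1, h2⟩
    exact ⟨x + a, y + a, z + a, by simpa using hs.map (· + a), by omega, by omega⟩

lemma LCont_map_sub (a : ℕ) (β : List ℕ) (h : ∀ y ∈ β, a ≤ y) :
    LCont (β.map (· - a)) → LCont β := by
  rintro ⟨x, y, z, hs, h1, h2⟩
  obtain ⟨l', hl', heq⟩ := List.sublist_map_iff.1 hs
  match l', heq with
  | [x', y', z'], heq =>
    simp only [List.map_cons, List.map_nil, List.cons.injEq, and_true] at heq
    obtain ⟨rfl, rfl, rfl⟩ := heq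
    have hx := h x' (hl'.subset (by simp))
    have hy := h y' (hl'.subset (by simp))
    have hz := h z' (hl'.subset (by simp))
    exact ⟨x', y', z', hl', by omega, by omega⟩

def Aof (m : ℕ) (l : List ℕ) : List ℕ := l.takeWhile (fun x => x != m)
def Braw (m : ℕ) (l : List ℕ) : List ℕ := (l.dropWhile (fun x => x != m)).tail
def Bof (m : ℕ) (l : List ℕ) : List ℕ := (Braw m l).map (· - (Aof m l).length)

lemma decomp_eq {m : ℕ} {l : List ℕ} (hl : m ∈ l) : l = Aof m l ++ m :: Braw m l := by
  cases hd : l.dropWhile (fun x => x != m) with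
  | nil =>
    exfalso
    have := List.dropWhile_eq_nil_iff.1 hd m hl
    simp at this
  | cons z t =>
    have hz : (z != m) = false := dropWhile_head?_false _ l z (by rw [hd]; rfl)
    have hz' : z = m := by simpa using hz
    rw [hz'] at hd
    have h2 := List.takeWhile_append_dropWhile (p := fun x => x != m) (l := l)
    rw [hd] at h2
    rw [Aof, Braw, hd]
    exact h2.symm

lemma decomp_main {m : ℕ} {l : List ℕ} (hl : l ∈ lperm (m + 1)) (hAv : LAv l) :
    (Aof m l).length + (Braw m l).length = m ∧
    Aof m l ∈ lperm (Aof m l).length ∧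
    LAv (Aof m l) ∧
    (∀ x ∈ Aof m l, x < (Aof m l).length) ∧
    (∀ y ∈ Braw m l, (Aof m l).length ≤ y ∧ y < m) ∧
    Bof m l ∈ lperm (Braw m l).length ∧
    LAv (Bof m l) := by
  set α := Aof m l with hαdef
  set β := Braw m l with hβdef
  set a := α.length with hadef
  set b := β.length with hbdef
  have hm : m ∈ l := (mem_iff_lt_of_mem_lperm hl).2 (by omega)
  have hdec : l = α ++ m :: β := decomp_eq hm
  have hlen : a + b = m := by
    have := length_of_mem_lperm hl
    rw [hdec] at this
    simp only [List.length_append, List.length_cons] at this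
    omega
  have hnd : (α ++ m :: β).Nodup := by rw [← hdec]; exact nodup_of_mem_lperm hl
  have hmem : ∀ x : ℕ, x ∈ α ++ m :: β ↔ x < m + 1 := by
    intro x
    rw [← hdec]
    exact mem_iff_lt_of_mem_lperm hl
  have hαm : ∀ x ∈ α, x < m := by
    intro x hx
    have h1 : x ≠ m := by
      have := List.mem_takeWhile_imp (hαdef ▸ hx)
      simpa using this
    have h2 : x < m + 1 := (hmem x).1 (List.mem_append_left _ hx)
    omega
  have hndα : α.Nodup := (List.nodup_append.1 hnd).1
  have hndmβ : (m :: β).Nodup := (List.nodup_append.1 hnd).2.1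
  have hdisj : ∀ x ∈ α, x ∉ m :: β := by
    intro x hx hx'
    exact (List.nodup_append.1 hnd).2.2 x hx x hx' rfl
  have hβm : ∀ y ∈ β, y < m := by
    intro y hy
    have h1 : y ≠ m := fun h => (List.nodup_cons.1 hndmβ).1 (h ▸ hy)
    have h2 : y < m + 1 := (hmem y).1 (List.mem_append_right _ (List.mem_cons_of_mem _ hy))
    omega
  have hLA := (LAv_decomp hαm hβm hnd).1 (hdec ▸ hAv)
  obtain ⟨hLAα, hLAβ, hcross⟩ := hLA
  have hAcard : α.toFinset.card = a := List.toFinset_card_of_nodup hndα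
  have hAfin : α.toFinset = Finset.range a := by
    rw [← hAcard]
    apply downclosed_eq_range
    intro x hx y hy
    rw [List.mem_toFinset] at hx ⊢
    have hyl : y ∈ α ++ m :: β := (hmem y).2 (by have := hαm x hx; omega)
    rcases List.mem_append.1 hyl with h' | h'
    · exact h'
    · rcases List.mem_cons.1 h' with rfl | h'
      · exact absurd (hαm x hx) (by omega)
      · exact absurd (hcross x hx y h') (by omega)
  have hαlt : ∀ x ∈ α, x < a := by
    intro x hx
    have : x ∈ Finset.range a := hAfin ▸ List.mem_toFinset.2 hx
    simpa using this
  have hαperm : α ∈ lperm a := by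
    rw [mem_lperm]
    exact List.perm_of_nodup_nodup_toFinset_eq hndα List.nodup_range
      (hAfin.trans (toFinset_range a).symm)
  have hβge : ∀ y ∈ β, a ≤ y ∧ y < m := by
    intro y hy
    refine ⟨?_, hβm y hy⟩
    by_contra hya
    push_neg at hya
    have : y ∈ α := by
      have : y ∈ Finset.range a := by simpa using hya
      rw [← hAfin, List.mem_toFinset] at this
      exact this
    exact hdisj y this (List.mem_cons_of_mem _ hy)
  have hβiff : ∀ y, y ∈ β ↔ a ≤ y ∧ y < m := by
    intro y
    refine ⟨hβge y, fun ⟨h1, h2⟩ => ?_⟩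
    have hyl : y ∈ α ++ m :: β := (hmem y).2 (by omega)
    rcases List.mem_append.1 hyl with h' | h'
    · exact absurd (hαlt y h') (by omega)
    · rcases List.mem_cons.1 h' with rfl | h'
      · omega
      · exact h'
  have hndβ : β.Nodup := (List.nodup_cons.1 hndmβ).2
  have hndβ' : (β.map (· - a)).Nodup := by
    apply hndβ.map_on
    intro x hx y hy hxy
    have := (hβge x hx).1
    have := (hβge y hy).1
    omega
  have hβ'fin : (β.map (· - a)).toFinset = Finset.range b := by
    ext z
    simp only [List.mem_toFinset, List.mem_map, Finset.mem_range]
    constructor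
    · rintro ⟨y, hy, rfl⟩
      have := hβge y hy
      omega
    · intro hz
      exact ⟨z + a, (hβiff (z + a)).2 (by omega), by omega⟩
  have hβ'perm : Bof m l ∈ lperm b := by
    rw [mem_lperm]
    have : (β.map (· - a)).length = b := by simp [hbdef]
    show (β.map (· - a)).Perm (List.range b)
    exact List.perm_of_nodup_nodup_toFinset_eq hndβ' List.nodup_range
      (hβ'fin.trans (toFinset_range b).symm)
  refine ⟨hlen, hαperm, hLAα, hαlt, hβge, hβ'perm, ?_⟩
  show LAv (β.map (· - a))
  intro hc
  exact hLAβ (LCont_map_sub a β (fun y hy => (hβge y hy).1) hc)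


lemma lbdes_decomp (α β : List ℕ) (m : ℕ) (hα : ∀ x ∈ α, x < m)
    (hβ : ∀ y ∈ β, α.length ≤ y ∧ y < m) (hlen : α.length + β.length = m) :
    lbdes (α ++ m :: β) = lbdes α + wstat (β.map (· - α.length)) := by
  set a := α.length with ha
  rw [lbdes_append]
  have hjunc : (match α.getLast? with
      | some x => if m + 1 < x then 1 else 0
      | none => 0) = 0 := by
    cases hg : α.getLast? with
    | none => rfl
    | some x =>
      have hx : x ∈ α := by
        obtain ⟨h, hx⟩ := List.mem_getLast?_eq_getLast (Option.mem_def.2 hg)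
        exact hx ▸ List.getLast_mem h
      simp only
      rw [if_neg]
      have := hα x hx
      omega
  rw [hjunc, add_zero]
  congr 1
  rw [lbdes_cons, wstat, lbdes_map_sub a β (fun y hy => (hβ y hy).1), hstat]
  cases β with
  | nil => simp [lbdes_nil]
  | cons y t =>
    have hy := hβ y (by simp)
    have hlt : ∀ z ∈ t, a ≤ z ∧ z < m := fun z hz => hβ z (List.mem_cons_of_mem _ hz)
    simp only [List.map_cons, List.head?_cons, List.length_cons, List.length_map,
      Option.some_inj, List.cons_ne_nil, or_false]
    have hlen' : a + (t.length + 1) = m := by simpa using hlen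
    generalize lbdes (y :: t) = L
    have : (y + 1 < m ↔ ¬ (y - a = t.length + 1 - 1)) := by omega
    split_ifs with h1 h2 h2 <;> omega

def fwdF (m : ℕ) (l : List ℕ) : (_ : ℕ × ℕ) × (List ℕ × List ℕ) :=
  ⟨((Aof m l).length, lbdes (Aof m l)), (Aof m l, Bof m l)⟩

def bwdF (m : ℕ) (x : (_ : ℕ × ℕ) × (List ℕ × List ℕ)) : List ℕ :=
  x.2.1 ++ m :: (x.2.2.map (· + x.2.1.length))

lemma recomb_mem {a b : ℕ} {α β' : List ℕ} (hα : α ∈ lperm a) (hβ : β' ∈ lperm b) :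
    (α ++ (a + b) :: β'.map (· + a)) ∈ lperm (a + b + 1) := by
  rw [mem_lperm]
  rw [show a + b + 1 = (a+b).succ from rfl, List.range_succ, List.range_add]
  have h1 : (β'.map (· + a)).Perm ((List.range b).map (fun x => a + x)) := by
    have := (mem_lperm.1 hβ).map (· + a)
    refine this.trans (List.Perm.of_eq ?_)
    exact List.map_congr_left (fun x _ => Nat.add_comm x a)
  have h2 : (α ++ β'.map (· + a)).Perm (List.range a ++ (List.range b).map (fun x => a + x)) :=
    (mem_lperm.1 hα).append h1
  exact List.perm_middle.trans ((h2.cons _).trans (List.perm_append_singleton _ _).symm)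

lemma P4 (m k : ℕ) :
    Bf (m + 1) k = ∑ a ∈ Finset.range (m + 1), ∑ i ∈ Finset.range (k + 1),
      Bf a i * Wf (m - a) (k - i) := by
  classical
  set T : Finset ((_ : ℕ × ℕ) × (List ℕ × List ℕ)) :=
    ((Finset.range (m + 1)) ×ˢ (Finset.range (k + 1))).sigma
      (fun pq => ((lperm pq.1).filter fun l => LAv l ∧ lbdes l = pq.2) ×ˢ
        ((lperm (m - pq.1)).filter fun l => LAv l ∧ wstat l = k - pq.2)) with hT
  have hcard : Bf (m + 1) k = T.card := by
    rw [Bf]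
    apply Finset.card_nbij' (fwdF m) (bwdF m)
    · -- forward maps
      intro l hl
      rw [Finset.mem_coe, Finset.mem_filter] at hl
      obtain ⟨hl1, hAv, hlb⟩ := hl
      obtain ⟨hlen, hαperm, hLAα, hαlt, hβge, hβ'perm, hLAβ'⟩ := decomp_main hl1 hAv
      have hm : m ∈ l := (mem_iff_lt_of_mem_lperm hl1).2 (by omega)
      have hdec := decomp_eq hm
      have hstat : lbdes l = lbdes (Aof m l) + wstat (Bof m l) := by
        conv_lhs => rw [hdec]
        exact lbdes_decomp _ _ m (fun x hx => lt_of_lt_of_le (hαlt x hx) (by omega))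
          hβge hlen
      rw [Finset.mem_coe, hT, Finset.mem_sigma, Finset.mem_product, Finset.mem_product]
      refine ⟨⟨?_, ?_⟩, ?_, ?_⟩
      · simp only [fwdF, Finset.mem_range]; omega
      · simp only [fwdF, Finset.mem_range]; omega
      · simp only [fwdF]
        exact Finset.mem_filter.2 ⟨hαperm, hLAα, rfl⟩
      · simp only [fwdF]
        have hb : m - (Aof m l).length = (Braw m l).length := by omega
        rw [hb]
        exact Finset.mem_filter.2 ⟨hβ'perm, hLAβ', by omega⟩
    · -- backward maps
      rintro ⟨⟨a, i⟩, α, β'⟩ hx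
      rw [Finset.mem_coe, Finset.mem_sigma, Finset.mem_product, Finset.mem_product] at hx
      dsimp only at hx
      obtain ⟨⟨ha, hi⟩, hα, hβ⟩ := hx
      rw [Finset.mem_filter] at hα hβ
      obtain ⟨hα1, hα2, hα3⟩ := hα
      obtain ⟨hβ1, hβ2, hβ3⟩ := hβ
      rw [Finset.mem_range] at ha hi
      have hlenα : α.length = a := length_of_mem_lperm hα1
      have hlenβ : β'.length = m - a := length_of_mem_lperm hβ1
      have hab : a + (m - a) = m := by omega
      have hmem : (α ++ m :: β'.map (· + α.length)) ∈ lperm (m + 1) := by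
        have := recomb_mem hα1 hβ1
        rw [hab] at this
        rw [hlenα]
        exact this
      rw [Finset.mem_coe, Finset.mem_filter]
      refine ⟨hmem, ?_, ?_⟩
      · -- LAv
        have hnd := nodup_of_mem_lperm hmem
        have hαm : ∀ x ∈ α, x < m := by
          intro x hxα
          have := (mem_iff_lt_of_mem_lperm hα1).1 hxα
          omega
        have hβm : ∀ y ∈ β'.map (· + α.length), y < m := by
          intro y hyβ
          obtain ⟨z, hz, rfl⟩ := List.mem_map.1 hyβ
          have := (mem_iff_lt_of_mem_lperm hβ1).1 hz
          omega
        rw [show bwdF m ⟨(a, i), (α, β')⟩ = α ++ m :: β'.map (· + α.length) from rfl]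
        rw [LAv_decomp hαm hβm hnd]
        refine ⟨hα2, ?_, ?_⟩
        · intro hc
          exact hβ2 ((LCont_map_add_iff α.length β').1 hc)
        · intro x hxα y hyβ
          obtain ⟨z, hz, rfl⟩ := List.mem_map.1 hyβ
          have := (mem_iff_lt_of_mem_lperm hα1).1 hxα
          omega
      · -- lbdes = k
        have hres : (β'.map (· + α.length)).map (· - α.length) = β' := by
          rw [List.map_map]
          have : ∀ z ∈ β', (fun x => x - α.length) ((fun x => x + α.length) z) = id z := by
            intro z _
            simp
          calc β'.map ((fun x => x - α.length) ∘ (fun x => x + α.length))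
              = β'.map id := List.map_congr_left (fun z hz => by simp)
            _ = β' := List.map_id β'
        rw [show bwdF m ⟨(a, i), (α, β')⟩ = α ++ m :: β'.map (· + α.length) from rfl]
        rw [lbdes_decomp]
        · rw [hres, hα3, hβ3]
          omega
        · intro x hxα
          have := (mem_iff_lt_of_mem_lperm hα1).1 hxα
          omega
        · intro y hyβ
          obtain ⟨z, hz, rfl⟩ := List.mem_map.1 hyβ
          have := (mem_iff_lt_of_mem_lperm hβ1).1 hz
          omega
        · simp only [List.length_map]
          omega
    · -- left inverse
      intro l hl
      rw [Finset.mem_coe, Finset.mem_filter] at hl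
      obtain ⟨hl1, hAv, hlb⟩ := hl
      obtain ⟨hlen, hαperm, hLAα, hαlt, hβge, hβ'perm, hLAβ'⟩ := decomp_main hl1 hAv
      have hm : m ∈ l := (mem_iff_lt_of_mem_lperm hl1).2 (by omega)
      have hdec := decomp_eq hm
      show Aof m l ++ m :: ((Bof m l).map (· + (Aof m l).length)) = l
      have : (Bof m l).map (· + (Aof m l).length) = Braw m l := by
        rw [Bof, List.map_map]
        calc (Braw m l).map ((fun x => x + (Aof m l).length) ∘ (fun x => x - (Aof m l).length))
            = (Braw m l).map id := List.map_congr_left (fun z hz => by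
              have := (hβge z hz).1
              simp only [Function.comp_apply, id_eq]
              omega)
          _ = Braw m l := List.map_id _
      rw [this]
      exact hdec.symm
    · -- right inverse
      rintro ⟨⟨a, i⟩, α, β'⟩ hx
      rw [Finset.mem_coe, Finset.mem_sigma, Finset.mem_product, Finset.mem_product] at hx
      dsimp only at hx
      obtain ⟨⟨ha, hi⟩, hα, hβ⟩ := hx
      rw [Finset.mem_filter] at hα hβ
      obtain ⟨hα1, hα2, hα3⟩ := hα
      obtain ⟨hβ1, hβ2, hβ3⟩ := hβ
      have hlenα : α.length = a := length_of_mem_lperm hα1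
      show fwdF m (α ++ m :: β'.map (· + α.length)) = _
      have hptrue : ∀ x ∈ α, (x != m) = true := by
        intro x hxα
        have h1 := (mem_iff_lt_of_mem_lperm hα1).1 hxα
        have := Finset.mem_range.1 ha
        simp only [bne_iff_ne, ne_eq]
        omega
      have hpfalse : (m != m) = false := by simp
      obtain ⟨htake, hdrop⟩ := takeWhile_append_cons (fun x => x != m) m
        (β'.map (· + α.length)) α hptrue hpfalse
      have hA : Aof m (α ++ m :: β'.map (· + α.length)) = α := htake
      have hBraw : Braw m (α ++ m :: β'.map (· + α.length)) = β'.map (· + α.length) := by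
        rw [Braw, hdrop, List.tail_cons]
      have hB : Bof m (α ++ m :: β'.map (· + α.length)) = β' := by
        rw [Bof, hBraw, hA, List.map_map]
        calc β'.map ((fun x => x - α.length) ∘ (fun x => x + α.length))
            = β'.map id := List.map_congr_left (fun z hz => by simp)
          _ = β' := List.map_id _
      rw [fwdF, hA, hB, hlenα, hα3]
  rw [hcard, hT, Finset.card_sigma, Finset.sum_product]
  refine Finset.sum_congr rfl (fun a _ => Finset.sum_congr rfl (fun i _ => ?_))
  rw [Finset.card_product]
  rfl


lemma LAv_nil : LAv [] := by
  rintro ⟨a, b, c, hs, -, -⟩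
  simp at hs

lemma lperm_zero : lperm 0 = {[]} := by
  rw [lperm]
  simp

lemma Bf_zero (k : ℕ) : Bf 0 k = if k = 0 then 1 else 0 := by
  rw [Bf, lperm_zero, Finset.filter_singleton]
  by_cases hk : k = 0
  · rw [if_pos, hk, if_pos rfl]
    · simp
    · exact ⟨LAv_nil, hk ▸ rfl⟩
  · rw [if_neg, if_neg hk]
    · simp
    · rintro ⟨-, h⟩
      exact hk (h.symm.trans rfl)

lemma Wf_zero (k : ℕ) : Wf 0 k = if k = 0 then 1 else 0 := by
  rw [Wf, lperm_zero, Finset.filter_singleton]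
  by_cases hk : k = 0
  · rw [if_pos, hk, if_pos rfl]
    · simp
    · exact ⟨LAv_nil, hk ▸ rfl⟩
  · rw [if_neg, if_neg hk]
    · simp
    · rintro ⟨-, h⟩
      exact hk (h.symm.trans rfl)

lemma P1 (n k : ℕ) : Bf n k = Cf n k + Df n k := by
  classical
  rw [Bf, Cf, Df]
  have h1 : ((lperm n).filter fun l => LAv l ∧ lbdes l = k ∧ l.head? = some (n - 1))
      = (((lperm n).filter fun l => LAv l ∧ lbdes l = k).filter
          fun l => l.head? = some (n - 1)) := by
    rw [Finset.filter_filter]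
    exact Finset.filter_congr (fun x _ => by tauto)
  have h2 : ((lperm n).filter fun l => LAv l ∧ lbdes l = k ∧ l.head? ≠ some (n - 1))
      = (((lperm n).filter fun l => LAv l ∧ lbdes l = k).filter
          fun l => ¬ (l.head? = some (n - 1))) := by
    rw [Finset.filter_filter]
    exact Finset.filter_congr (fun x _ => by tauto)
  rw [h1, h2]
  exact (Finset.card_filter_add_card_filter_not _).symm

lemma hstat_of_head (b : ℕ) {l : List ℕ} (hl : l ∈ lperm (b + 1)) :
    hstat l = if l.head? = some b then 0 else 1 := by
  have hlen := length_of_mem_lperm hl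
  have hne : l ≠ [] := by
    intro h
    rw [h] at hlen
    simp at hlen
  rw [hstat, hlen]
  simp only [Nat.add_sub_cancel, hne, or_false]

lemma P2zero (b : ℕ) : Wf (b + 1) 0 = Cf (b + 1) 0 := by
  rw [Wf, Cf]
  congr 1
  apply Finset.filter_congr
  intro l hl
  have h := hstat_of_head b hl
  simp only [Nat.add_sub_cancel, wstat]
  by_cases hh : l.head? = some b
  · rw [if_pos hh] at h
    rw [h, add_zero]
    tauto
  · rw [if_neg hh] at h
    rw [h]
    constructor
    · rintro ⟨-, h2⟩
      exact absurd h2 (by omega)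
    · rintro ⟨-, -, hh'⟩
      exact absurd hh' hh

lemma P2succ (b j : ℕ) : Wf (b + 1) (j + 1) = Cf (b + 1) (j + 1) + Df (b + 1) j := by
  classical
  rw [Wf, Cf, Df]
  have hsplit := Finset.card_filter_add_card_filter_not
    (s := (lperm (b + 1)).filter fun l => LAv l ∧ wstat l = j + 1)
    (p := fun l => l.head? = some b)
  rw [Finset.filter_filter, Finset.filter_filter] at hsplit
  have e1 : ((lperm (b + 1)).filter fun l => (LAv l ∧ wstat l = j + 1) ∧ l.head? = some b)
      = ((lperm (b + 1)).filter fun l => LAv l ∧ lbdes l = j + 1 ∧ l.head? = some ((b+1) - 1)) := by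
    apply Finset.filter_congr
    intro l hl
    have h := hstat_of_head b hl
    simp only [Nat.add_sub_cancel, wstat]
    by_cases hh : l.head? = some b
    · rw [if_pos hh] at h
      rw [h, add_zero]
      tauto
    · rw [if_neg hh] at h
      constructor
      · rintro ⟨-, hh'⟩
        exact absurd hh' hh
      · rintro ⟨-, -, hh'⟩
        exact absurd hh' hh
  have e2 : ((lperm (b + 1)).filter fun l => (LAv l ∧ wstat l = j + 1) ∧ ¬ l.head? = some b)
      = ((lperm (b + 1)).filter fun l => LAv l ∧ lbdes l = j ∧ l.head? ≠ some ((b+1) - 1)) := by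
    apply Finset.filter_congr
    intro l hl
    have h := hstat_of_head b hl
    simp only [Nat.add_sub_cancel, wstat]
    by_cases hh : l.head? = some b
    · rw [if_pos hh] at h
      constructor
      · rintro ⟨-, hh'⟩
        exact absurd hh hh'
      · rintro ⟨-, -, hh'⟩
        exact absurd hh hh'
    · rw [if_neg hh] at h
      rw [h]
      constructor
      · rintro ⟨⟨h1, h2⟩, -⟩
        exact ⟨h1, by omega, hh⟩
      · rintro ⟨h1, h2, -⟩
        exact ⟨⟨h1, by omega⟩, hh⟩
  rw [e1, e2] at hsplit
  omega

lemma wstat_cons_max (b : ℕ) {t : List ℕ} (ht : t ∈ lperm b) :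
    lbdes (b :: t) = wstat t := by
  rw [lbdes_cons, wstat, hstat]
  cases t with
  | nil => simp [lbdes_nil]
  | cons y t' =>
    have hlen : (y :: t').length = b := length_of_mem_lperm ht
    have hy : y < b := (mem_iff_lt_of_mem_lperm ht).1 (by simp)
    simp only [List.head?_cons, Option.some_inj, List.cons_ne_nil, or_false]
    rw [hlen]
    generalize lbdes (y :: t') = L
    split_ifs <;> omega

lemma P3 (b j : ℕ) : Cf (b + 1) j = Wf b j := by
  classical
  rw [Cf, Wf]
  apply Finset.card_nbij' (fun l => l.tail) (fun t => b :: t)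
  · intro l hl
    rw [Finset.mem_coe, Finset.mem_filter] at hl
    obtain ⟨hl1, hAv, hlb, hhd⟩ := hl
    simp only [Nat.add_sub_cancel] at hhd
    obtain ⟨t, rfl⟩ : ∃ t, l = b :: t := by
      cases l with
      | nil => simp at hhd
      | cons x t =>
        rw [List.head?_cons, Option.some_inj] at hhd
        exact ⟨t, by rw [hhd]⟩
    have htperm : t ∈ lperm b := by
      rw [mem_lperm]
      have h1 : (b :: t).Perm (List.range (b + 1)) := mem_lperm.1 hl1
      have h2 : (List.range (b + 1)).Perm (b :: List.range b) := by
        rw [List.range_succ]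
        exact List.perm_append_singleton _ _
      exact (h1.trans h2).cons_inv
    rw [Finset.mem_coe]; dsimp only; rw [List.tail_cons, Finset.mem_filter]
    refine ⟨htperm, ?_, ?_⟩
    · exact LAv_sublist (List.sublist_cons_self b t) hAv
    · rw [← wstat_cons_max b htperm]
      exact hlb
  · intro t ht
    rw [Finset.mem_coe, Finset.mem_filter] at ht
    obtain ⟨ht1, hAv, hw⟩ := ht
    have hmem : (b :: t) ∈ lperm (b + 1) := by
      rw [mem_lperm]
      have h2 : (List.range (b + 1)).Perm (b :: List.range b) := by
        rw [List.range_succ]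
        exact List.perm_append_singleton _ _
      exact ((mem_lperm.1 ht1).cons b).trans h2.symm
    rw [Finset.mem_coe, Finset.mem_filter]
    refine ⟨hmem, ?_, ?_, by simp⟩
    · rw [LAv_cons_max (fun y hy => (mem_iff_lt_of_mem_lperm ht1).1 hy)]
      exact hAv
    · rw [wstat_cons_max b ht1, hw]
  · intro l hl
    rw [Finset.mem_coe, Finset.mem_filter] at hl
    obtain ⟨-, -, -, hhd⟩ := hl
    simp only [Nat.add_sub_cancel] at hhd
    cases l with
    | nil => simp at hhd
    | cons x t =>
      rw [List.head?_cons, Option.some_inj] at hhd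
      dsimp only; rw [List.tail_cons, hhd]
  · intro t ht
    dsimp only; rw [List.tail_cons]


lemma Wrec0 (b : ℕ) : Wf (b + 1) 0 = Wf b 0 := (P2zero b).trans (P3 b 0)

lemma Wrec1 (b j : ℕ) : Wf (b + 1) (j + 1) + Wf b j = Wf b (j + 1) + Bf (b + 1) j := by
  have h1 := P2succ b j
  have h2 := P1 (b + 1) j
  have h3 := P3 b (j + 1)
  have h4 := P3 b j
  omega

lemma master0 (m : ℕ) : Bf (m + 2) 0 = 2 * Bf (m + 1) 0 := by
  have hP4a := P4 (m + 1) 0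
  have hP4b := P4 m 0
  have hW00 : Wf 0 0 = 1 := by rw [Wf_zero]; simp
  have hsimp : ∀ M : ℕ, (∑ a ∈ Finset.range (M + 1), ∑ i ∈ Finset.range 1,
      Bf a i * Wf (M - a) (0 - i)) = ∑ a ∈ Finset.range (M + 1), Bf a 0 * Wf (M - a) 0 := by
    intro M
    refine Finset.sum_congr rfl (fun a _ => ?_)
    rw [Finset.sum_range_one]
  rw [hsimp] at hP4a hP4b
  rw [Finset.sum_range_succ] at hP4a
  have hstep : ∀ a ∈ Finset.range (m + 1), Bf a 0 * Wf (m + 1 - a) 0 = Bf a 0 * Wf (m - a) 0 := by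
    intro a ha
    have ha' := Finset.mem_range.1 ha
    have : m + 1 - a = (m - a) + 1 := by omega
    rw [this, Wrec0]
  rw [Finset.sum_congr rfl hstep] at hP4a
  rw [Nat.sub_self, hW00, mul_one] at hP4a
  rw [hP4a, ← hP4b]
  omega

lemma master (m k : ℕ) :
    (Bf (m + 2) (k + 1) : ℤ) + 2 * Bf (m + 1) k = 2 * Bf (m + 1) (k + 1) +
      ∑ a ∈ Finset.range (m + 2), ∑ i ∈ Finset.range (k + 1),
        (Bf a i : ℤ) * Bf (m + 1 - a) (k - i) := by
  have hP4 : ∀ M K : ℕ, (Bf (M + 1) K : ℤ)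
      = ∑ a ∈ Finset.range (M + 1), ∑ i ∈ Finset.range (K + 1),
          (Bf a i : ℤ) * Wf (M - a) (K - i) := by
    intro M K
    rw [P4 M K]
    push_cast
    rfl
  have hW00 : (Wf 0 0 : ℤ) = 1 := by rw [Wf_zero]; simp
  have hWz : ∀ j : ℕ, j ≠ 0 → (Wf 0 j : ℤ) = 0 := by
    intro j hj
    rw [Wf_zero, if_neg hj]
    simp
  have hBz : ∀ j : ℕ, j ≠ 0 → (Bf 0 j : ℤ) = 0 := by
    intro j hj
    rw [Bf_zero, if_neg hj]
    simp
  have hB00 : (Bf 0 0 : ℤ) = 1 := by rw [Bf_zero]; simp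
  -- expand Bf (m+2) (k+1)
  have hmain := hP4 (m + 1) (k + 1)
  rw [Finset.sum_range_succ] at hmain
  -- the a = m+1 term
  have hlast : (∑ i ∈ Finset.range (k + 1 + 1),
      (Bf (m + 1) i : ℤ) * Wf (m + 1 - (m + 1)) (k + 1 - i)) = Bf (m + 1) (k + 1) := by
    rw [Finset.sum_range_succ, Nat.sub_self, Nat.sub_self, hW00, mul_one]
    rw [Finset.sum_eq_zero, zero_add]
    intro i hi
    have hi' := Finset.mem_range.1 hi
    rw [hWz (k + 1 - i) (by omega), mul_zero]
  rw [hlast] at hmain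
  -- rewrite the a ≤ m terms
  have hGa : ∀ a ∈ Finset.range (m + 1),
      (∑ i ∈ Finset.range (k + 1 + 1), (Bf a i : ℤ) * Wf (m + 1 - a) (k + 1 - i))
      = (∑ i ∈ Finset.range (k + 1 + 1), (Bf a i : ℤ) * Wf (m - a) (k + 1 - i))
        + (∑ i ∈ Finset.range (k + 1), (Bf a i : ℤ) * Bf (m - a + 1) (k - i))
        - (∑ i ∈ Finset.range (k + 1), (Bf a i : ℤ) * Wf (m - a) (k - i)) := by
    intro a ha
    have ha' := Finset.mem_range.1 ha
    have hma : m + 1 - a = (m - a) + 1 := by omega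
    rw [hma]
    rw [Finset.sum_range_succ, Finset.sum_range_succ (f := fun i =>
      (Bf a i : ℤ) * Wf (m - a) (k + 1 - i))]
    have hWrec0 : (Wf (m - a + 1) 0 : ℤ) = Wf (m - a) 0 := by
      rw [Wrec0]
    have hstep : ∀ i ∈ Finset.range (k + 1),
        (Bf a i : ℤ) * Wf (m - a + 1) (k + 1 - i)
        = (Bf a i : ℤ) * Wf (m - a) (k + 1 - i)
          + (Bf a i : ℤ) * Bf (m - a + 1) (k - i)
          - (Bf a i : ℤ) * Wf (m - a) (k - i) := by
      intro i hi
      have hi' := Finset.mem_range.1 hi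
      have hki : k + 1 - i = (k - i) + 1 := by omega
      have hWr : (Wf (m - a + 1) ((k - i) + 1) : ℤ)
          = Wf (m - a) ((k - i) + 1) + Bf (m - a + 1) (k - i) - Wf (m - a) (k - i) := by
        have h0 := Wrec1 (m - a) (k - i)
        have h2 : (Wf (m - a + 1) (k - i + 1) : ℤ) + (Wf (m - a) (k - i) : ℤ)
            = (Wf (m - a) (k - i + 1) : ℤ) + (Bf (m - a + 1) (k - i) : ℤ) := by
          exact_mod_cast congrArg (Nat.cast : ℕ → ℤ) h0
        linarith
      rw [hki, hWr]
      ring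
    rw [Finset.sum_congr rfl hstep, Nat.sub_self, hWrec0]
    rw [Finset.sum_sub_distrib, Finset.sum_add_distrib]
    ring
  rw [Finset.sum_congr rfl hGa] at hmain
  rw [Finset.sum_sub_distrib, Finset.sum_add_distrib] at hmain
  have hT1 : (∑ a ∈ Finset.range (m + 1), ∑ i ∈ Finset.range (k + 1 + 1),
      (Bf a i : ℤ) * Wf (m - a) (k + 1 - i)) = Bf (m + 1) (k + 1) := (hP4 m (k + 1)).symm
  have hT3 : (∑ a ∈ Finset.range (m + 1), ∑ i ∈ Finset.range (k + 1),
      (Bf a i : ℤ) * Wf (m - a) (k - i)) = Bf (m + 1) k := (hP4 m k).symm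
  rw [hT1, hT3] at hmain
  -- now relate Σ T2 to the full convolution
  have hconv : (∑ a ∈ Finset.range (m + 2), ∑ i ∈ Finset.range (k + 1),
      (Bf a i : ℤ) * Bf (m + 1 - a) (k - i))
      = (∑ a ∈ Finset.range (m + 1), ∑ i ∈ Finset.range (k + 1),
          (Bf a i : ℤ) * Bf (m - a + 1) (k - i)) + Bf (m + 1) k := by
    rw [Finset.sum_range_succ]
    congr 1
    · refine Finset.sum_congr rfl (fun a ha => Finset.sum_congr rfl (fun i _ => ?_))
      have ha' := Finset.mem_range.1 ha
      have : m + 1 - a = m - a + 1 := by omega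
      rw [this]
    · rw [Finset.sum_range_succ, Nat.sub_self, Nat.sub_self, hB00, mul_one]
      rw [Finset.sum_eq_zero, zero_add]
      intro i hi
      have hi' := Finset.mem_range.1 hi
      rw [hBz (k - i) (by omega), mul_zero]
  rw [hconv]
  linarith [hmain]


def fN (n k : ℕ) : ℕ := 2 ^ (n - 2 * k - 1) * Nat.choose (n - 1) (2 * k) * catalan k

lemma fN_zero (k : ℕ) : fN 0 k = if k = 0 then 1 else 0 := by
  cases k with
  | zero => simp [fN]
  | succ k =>
    rw [fN, Nat.choose_eq_zero_of_lt (by omega)]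
    simp

lemma fN_one (k : ℕ) : fN 1 k = if k = 0 then 1 else 0 := by
  cases k with
  | zero => simp [fN]
  | succ k =>
    rw [fN, Nat.choose_eq_zero_of_lt (by omega)]
    simp

lemma hockey (s r : ℕ) : ∑ p ∈ Finset.range (s + 1), Nat.choose p r
    = Nat.choose (s + 1) (r + 1) := by
  have hsub : Finset.Icc r s ⊆ Finset.range (s + 1) := by
    intro x hx
    rw [Finset.mem_Icc] at hx
    rw [Finset.mem_range]
    omega
  have hzero : ∀ x ∈ Finset.range (s + 1), x ∉ Finset.Icc r s → Nat.choose x r = 0 := by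
    intro x hx hnx
    rw [Finset.mem_range] at hx
    rw [Finset.mem_Icc] at hnx
    exact Nat.choose_eq_zero_of_lt (by omega)
  rw [← Finset.sum_subset hsub hzero]
  exact Nat.sum_Icc_choose s r

lemma vander : ∀ (s r t : ℕ), (∑ p ∈ Finset.range (s + 1), Nat.choose p r * Nat.choose (s - p) t)
    = Nat.choose (s + 1) (r + t + 1)
  | 0, r, t => by
    rw [Finset.sum_range_one]
    rcases Nat.eq_zero_or_pos (r + t) with h | h
    · have hr : r = 0 := by omega
      have ht : t = 0 := by omega
      subst hr; subst ht
      simp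
    · have h1 : Nat.choose 1 (r + t + 1) = 0 := Nat.choose_eq_zero_of_lt (by omega)
      have h2 : Nat.choose 0 r * Nat.choose (0 - 0) t = 0 := by
        rcases Nat.eq_zero_or_pos r with rfl | hr
        · have ht : 0 < t := by omega
          rw [Nat.choose_eq_zero_of_lt ht, mul_zero]
        · rw [Nat.choose_eq_zero_of_lt hr, zero_mul]
      rw [h2]
      simpa using h1.symm
  | s + 1, r, 0 => by
    have h : ∀ p ∈ Finset.range (s + 2), Nat.choose p r * Nat.choose (s + 1 - p) 0
        = Nat.choose p r := by
      intro p _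
      rw [Nat.choose_zero_right, mul_one]
    rw [Finset.sum_congr rfl h, hockey (s + 1) r]
  | s + 1, r, t + 1 => by
    rw [Finset.sum_range_succ, Nat.sub_self,
      Nat.choose_eq_zero_of_lt (by omega : (0:ℕ) < t + 1), mul_zero, add_zero]
    have h : ∀ p ∈ Finset.range (s + 1), Nat.choose p r * Nat.choose (s + 1 - p) (t + 1)
        = Nat.choose p r * Nat.choose (s - p) (t + 1) + Nat.choose p r * Nat.choose (s - p) t := by
      intro p hp
      have hp' := Finset.mem_range.1 hp
      have : s + 1 - p = (s - p) + 1 := by omega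
      rw [this, Nat.choose_succ_succ, mul_add]
      simp only [Nat.succ_eq_add_one]
      omega
    rw [Finset.sum_congr rfl h, Finset.sum_add_distrib, vander s r (t + 1), vander s r t]
    have e : r + (t + 1) + 1 = (r + t + 1) + 1 := by omega
    rw [e, Nat.choose_succ_succ (s + 1) (r + t + 1)]
    simp only [Nat.succ_eq_add_one]
    omega

lemma fN_key (m k : ℕ) : fN (m + 2) (k + 1)
    = 2 * fN (m + 1) (k + 1) + 2 ^ (m - 2 * k - 1) * Nat.choose m (2 * k + 1) * catalan (k + 1) := by
  rw [fN, fN]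
  have he1 : m + 2 - 2 * (k + 1) - 1 = m - 2 * k - 1 := by omega
  have he2 : m + 2 - 1 = m + 1 := by omega
  have he3 : m + 1 - 1 = m := by omega
  rw [he1, he2, he3]
  rcases le_or_gt (2 * k + 2) m with hm | hm
  · have he4 : m + 1 - 2 * (k + 1) - 1 = m - 2 * k - 2 := by omega
    rw [he4]
    have he5 : 2 * (2 ^ (m - 2 * k - 2) * Nat.choose m (2 * (k + 1)) * catalan (k + 1))
        = 2 ^ (m - 2 * k - 1) * Nat.choose m (2 * (k + 1)) * catalan (k + 1) := by
      rw [← mul_assoc, ← mul_assoc, ← pow_succ']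
      congr 3
      omega
    rw [he5]
    have hch := Nat.choose_succ_succ m (2 * k + 1)
    simp only [Nat.succ_eq_add_one] at hch
    rw [show 2 * (k + 1) = 2 * k + 1 + 1 by omega, hch]
    ring
  · rw [Nat.choose_eq_zero_of_lt (show m < 2 * (k + 1) by omega), mul_zero, zero_mul, mul_zero,
      zero_add]
    congr 2
    rcases Nat.lt_or_ge m (2 * k + 1) with h2 | h2
    · rw [Nat.choose_eq_zero_of_lt (by omega), Nat.choose_eq_zero_of_lt (by omega)]
    · have : m = 2 * k + 1 := by omega
      subst this
      rw [show 2 * k + 1 + 1 = 2 * (k + 1) by omega, Nat.choose_self, Nat.choose_self]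

lemma fN_master0 (m : ℕ) : fN (m + 2) 0 = 2 * fN (m + 1) 0 := by
  rw [fN, fN]
  simp only [Nat.mul_zero, Nat.sub_zero, Nat.choose_zero_right, catalan_zero, mul_one]
  rw [show m + 2 - 1 = m + 1 by omega, show m + 1 - 1 = m + 0 by omega]
  rw [pow_succ]
  ring

lemma fN_conv (m k : ℕ) :
    (∑ a ∈ Finset.range (m + 2), ∑ i ∈ Finset.range (k + 1), fN a i * fN (m + 1 - a) (k - i))
    = 2 * fN (m + 1) k + 2 ^ (m - 2 * k - 1) * Nat.choose m (2 * k + 1) * catalan (k + 1) := by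
  -- split off a = 0 (first) and a = m+1 (last)
  rw [Finset.sum_range_succ'] -- pulls out a = 0
  have hzero : (∑ i ∈ Finset.range (k + 1), fN 0 i * fN (m + 1 - 0) (k - i)) = fN (m + 1) k := by
    rw [Finset.sum_range_succ']
    have h1 : ∀ i ∈ Finset.range k, fN 0 (i + 1) * fN (m + 1 - 0) (k - (i + 1)) = 0 := by
      intro i _
      rw [fN_zero, if_neg (by omega), zero_mul]
    rw [Finset.sum_congr rfl h1, Finset.sum_const_zero, zero_add, fN_zero, if_pos rfl, one_mul,
      Nat.sub_zero, Nat.sub_zero]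
  rw [hzero]
  rw [Finset.sum_range_succ] -- pulls out a+1 = m+1, i.e. new index a = m
  have hlastin : (∑ i ∈ Finset.range (k + 1), fN (m + 1) i * fN (m + 1 - (m + 1)) (k - i))
      = fN (m + 1) k := by
    rw [Finset.sum_range_succ]
    have h1 : ∀ i ∈ Finset.range k, fN (m + 1) i * fN (m + 1 - (m + 1)) (k - i) = 0 := by
      intro i hi
      have hi' := Finset.mem_range.1 hi
      rw [Nat.sub_self, fN_zero, if_neg (by omega), mul_zero]
    rw [Finset.sum_congr rfl h1, Finset.sum_const_zero, zero_add, Nat.sub_self, Nat.sub_self,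
      fN_zero, if_pos rfl, mul_one]
  rw [hlastin]
  -- interior
  have hint : (∑ a ∈ Finset.range m, ∑ i ∈ Finset.range (k + 1),
      fN (a + 1) i * fN (m + 1 - (a + 1)) (k - i))
      = 2 ^ (m - 2 * k - 1) * Nat.choose m (2 * k + 1) * catalan (k + 1) := by
    cases m with
    | zero =>
      simp [Nat.choose_eq_zero_of_lt (show (0:ℕ) < 2 * k + 1 by omega)]
    | succ m' =>
      -- per-term rewriting
      have hterm : ∀ a ∈ Finset.range (m' + 1), ∀ i ∈ Finset.range (k + 1),
          fN (a + 1) i * fN (m' + 1 + 1 - (a + 1)) (k - i)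
          = 2 ^ (m' + 1 - 2 * k - 1) * (Nat.choose a (2 * i) * Nat.choose (m' - a) (2 * (k - i)))
            * (catalan i * catalan (k - i)) := by
        intro a ha i hi
        have ha' := Finset.mem_range.1 ha
        have hi' := Finset.mem_range.1 hi
        rw [fN, fN]
        rw [show a + 1 - 1 = a by omega, show a + 1 - 2 * i - 1 = a - 2 * i by omega,
          show m' + 1 + 1 - (a + 1) = m' + 1 - a by omega,
          show m' + 1 - a - 1 = m' - a by omega]
        rcases Nat.lt_or_ge a (2 * i) with hc1 | hc1
        · rw [Nat.choose_eq_zero_of_lt hc1]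
          ring
        rcases Nat.lt_or_ge (m' - a) (2 * (k - i)) with hc2 | hc2
        · rw [Nat.choose_eq_zero_of_lt hc2]
          ring
        have hexp : m' + 1 - a - 2 * (k - i) - 1 = m' - a - 2 * (k - i) := by omega
        rw [hexp]
        have hpow : 2 ^ (a - 2 * i) * 2 ^ (m' - a - 2 * (k - i)) = 2 ^ (m' + 1 - 2 * k - 1) := by
          rw [← pow_add]
          congr 1
          omega
        calc 2 ^ (a - 2 * i) * Nat.choose a (2 * i) * catalan i *
              (2 ^ (m' - a - 2 * (k - i)) * Nat.choose (m' - a) (2 * (k - i)) * catalan (k - i))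
            = (2 ^ (a - 2 * i) * 2 ^ (m' - a - 2 * (k - i))) *
              (Nat.choose a (2 * i) * Nat.choose (m' - a) (2 * (k - i)))
              * (catalan i * catalan (k - i)) := by ring
          _ = _ := by rw [hpow]
      rw [Finset.sum_congr rfl (fun a ha => Finset.sum_congr rfl (hterm a ha))]
      rw [Finset.sum_comm]
      have hinner : ∀ i ∈ Finset.range (k + 1),
          (∑ a ∈ Finset.range (m' + 1), 2 ^ (m' + 1 - 2 * k - 1)
            * (Nat.choose a (2 * i) * Nat.choose (m' - a) (2 * (k - i)))
            * (catalan i * catalan (k - i)))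
          = 2 ^ (m' + 1 - 2 * k - 1) * Nat.choose (m' + 1) (2 * k + 1)
            * (catalan i * catalan (k - i)) := by
        intro i hi
        have hi' := Finset.mem_range.1 hi
        rw [← Finset.sum_mul, ← Finset.mul_sum]
        rw [vander m' (2 * i) (2 * (k - i))]
        rw [show 2 * i + 2 * (k - i) + 1 = 2 * k + 1 by omega]
      rw [Finset.sum_congr rfl hinner]
      rw [← Finset.mul_sum]
      congr 1
      rw [catalan_succ']
      rw [Finset.Nat.sum_antidiagonal_eq_sum_range_succ_mk]
  rw [hint]
  ring


lemma Bf_one (k : ℕ) : Bf 1 k = if k = 0 then 1 else 0 := by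
  have h := P4 0 k
  rw [Finset.sum_range_one] at h
  cases k with
  | zero =>
    rw [h, Finset.sum_range_one, Bf_zero, Wf_zero]
    simp
  | succ k =>
    rw [h, if_neg (by omega)]
    apply Finset.sum_eq_zero
    intro i hi
    have hi' := Finset.mem_range.1 hi
    rcases Nat.eq_zero_or_pos i with rfl | hip
    · rw [Wf_zero, if_neg (by omega), mul_zero]
    · rw [Bf_zero, if_neg (by omega), zero_mul]

lemma Bf_eq_fN : ∀ n k, Bf n k = fN n k := by
  intro n
  induction n using Nat.strong_induction_on with
  | _ n ih =>
    match n with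
    | 0 => intro k; rw [Bf_zero, fN_zero]
    | 1 => intro k; rw [Bf_one, fN_one]
    | (m + 2) =>
      intro k
      cases k with
      | zero =>
        rw [master0, fN_master0, ih (m + 1) (by omega)]
      | succ k =>
        have hZ := master m k
        have hconv : (∑ a ∈ Finset.range (m + 2), ∑ i ∈ Finset.range (k + 1),
            (Bf a i : ℤ) * Bf (m + 1 - a) (k - i))
            = ∑ a ∈ Finset.range (m + 2), ∑ i ∈ Finset.range (k + 1),
              (fN a i : ℤ) * fN (m + 1 - a) (k - i) := by
          refine Finset.sum_congr rfl (fun a ha => Finset.sum_congr rfl (fun i _ => ?_))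
          have ha' := Finset.mem_range.1 ha
          rw [ih a (by omega) i, ih (m + 1 - a) (by omega) (k - i)]
        rw [hconv, ih (m + 1) (by omega) k, ih (m + 1) (by omega) (k + 1)] at hZ
        have hfnN : fN (m + 2) (k + 1) + 2 * fN (m + 1) k = 2 * fN (m + 1) (k + 1) +
            ∑ a ∈ Finset.range (m + 2), ∑ i ∈ Finset.range (k + 1),
              fN a i * fN (m + 1 - a) (k - i) := by
          have h1 := fN_conv m k
          have h2 := fN_key m k
          omega
        have hfn : (fN (m + 2) (k + 1) : ℤ) + 2 * fN (m + 1) k = 2 * fN (m + 1) (k + 1) +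
            ∑ a ∈ Finset.range (m + 2), ∑ i ∈ Finset.range (k + 1),
              (fN a i : ℤ) * fN (m + 1 - a) (k - i) := by
          have := congrArg (Nat.cast : ℕ → ℤ) hfnN
          push_cast at this
          convert this using 2 <;> push_cast <;> ring
        have : (Bf (m + 2) (k + 1) : ℤ) = fN (m + 2) (k + 1) := by linarith
        exact_mod_cast this


lemma ofFn_mem_lperm {n : ℕ} (π : Equiv.Perm (Fin n)) :
    List.ofFn (fun i => (π i : ℕ)) ∈ lperm n := by
  rw [mem_lperm, List.ofFn_eq_map]
  have h1 : (List.finRange n).map π |>.Perm (List.finRange n) := by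
    apply List.perm_of_nodup_nodup_toFinset_eq
    · exact (List.nodup_finRange n).map π.injective
    · exact List.nodup_finRange n
    · ext x
      simp only [List.mem_toFinset, List.mem_map, List.mem_finRange, true_and, iff_true]
      exact ⟨π.symm x, by simp⟩
  have h2 : ((List.finRange n).map π).map Fin.val |>.Perm ((List.finRange n).map Fin.val) :=
    h1.map Fin.val
  rw [show (List.finRange n).map Fin.val = List.range n from List.ext_getElem (by simp) (by simp)] at h2
  have h3 : (List.finRange n).map (fun i => (π i : ℕ)) = ((List.finRange n).map π).map Fin.val := by
    rw [List.map_map]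
    rfl
  rw [h3]
  exact h2

lemma LCont_iff_get (l : List ℕ) : LCont l ↔ ∃ i j k : Fin l.length,
    i < j ∧ j < k ∧ l.get k < l.get i ∧ l.get i < l.get j := by
  constructor
  · rintro ⟨a, b, c, hs, h1, h2⟩
    obtain ⟨is, heq, hpw⟩ := List.sublist_eq_map_getElem hs
    match is, heq, hpw with
    | [i, j, k], heq, hpw =>
      simp only [List.map_cons, List.map_nil, List.cons.injEq, and_true] at heq
      obtain ⟨ha, hb, hc⟩ := heq
      rw [List.pairwise_cons, List.pairwise_cons] at hpw
      refine ⟨i, j, k, ?_, ?_, ?_, ?_⟩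
      · exact Fin.lt_def.2 (hpw.1 j (by simp))
      · exact Fin.lt_def.2 (hpw.2.1 k (by simp))
      · rw [ha, hc] at h1; exact h1
      · rw [ha, hb] at h2; exact h2
  · rintro ⟨i, j, k, hij, hjk, h1, h2⟩
    refine ⟨l.get i, l.get j, l.get k, ?_, h1, h2⟩
    have := List.map_getElem_sublist (l := l) (is := [i, j, k]) ?_
    · simpa using this
    · simp only [List.pairwise_cons, List.mem_cons, List.mem_singleton]
      refine ⟨?_, ?_, ?_⟩
      · rintro x (rfl | rfl | h)
        · exact Fin.lt_def.1 hij
        · exact Fin.lt_def.1 (hij.trans hjk)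
        · simp at h
      · rintro x (rfl | h)
        · exact Fin.lt_def.1 hjk
        · simp at h
      · simp

lemma perm231_apply_0 : (perm231 0 : Fin 3) = 1 := rfl
lemma perm231_apply_1 : (perm231 1 : Fin 3) = 2 := rfl
lemma perm231_apply_2 : (perm231 2 : Fin 3) = 0 := rfl

lemma get_ofFn' {n : ℕ} (f : Fin n → ℕ) (i : Fin (List.ofFn f).length) :
    (List.ofFn f).get i = f ⟨(i : ℕ), by have := i.2; simpa using this⟩ := by
  rw [List.get_ofFn]
  congr 1

lemma get_ofFn_cast {n : ℕ} (g : Fin n → ℕ) (hlen : (List.ofFn g).length = n) (i : Fin n) :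
    (List.ofFn g).get (Fin.cast hlen.symm i) = g i := by
  rw [List.get_ofFn]
  congr 1

lemma avoids_iff {n : ℕ} (π : Equiv.Perm (Fin n)) :
    Avoids π perm231 ↔ LAv (List.ofFn (fun i => (π i : ℕ))) := by
  rw [Avoids, LAv]
  apply not_congr
  set l := List.ofFn (fun i => (π i : ℕ)) with hl
  have hlen : l.length = n := by simp [hl]
  rw [LCont_iff_get]
  constructor
  · rintro ⟨f, hmono, hcond⟩
    have h01 : f 0 < f 1 := hmono (by decide)
    have h12 : f 1 < f 2 := hmono (by decide)
    have hv1 : π (f 2) < π (f 0) := (hcond 2 0).1 (by decide)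
    have hv2 : π (f 0) < π (f 1) := (hcond 0 1).1 (by decide)
    refine ⟨Fin.cast hlen.symm (f 0), Fin.cast hlen.symm (f 1), Fin.cast hlen.symm (f 2),
      ?_, ?_, ?_, ?_⟩
    · exact h01
    · exact h12
    · rw [get_ofFn_cast (fun i => (π i : ℕ)) hlen (f 2),
        get_ofFn_cast (fun i => (π i : ℕ)) hlen (f 0)]
      exact Fin.lt_def.1 hv1
    · rw [get_ofFn_cast (fun i => (π i : ℕ)) hlen (f 0),
        get_ofFn_cast (fun i => (π i : ℕ)) hlen (f 1)]
      exact Fin.lt_def.1 hv2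
  · rintro ⟨i, j, k, hij, hjk, h1, h2⟩
    set i' : Fin n := Fin.cast hlen i
    set j' : Fin n := Fin.cast hlen j
    set k' : Fin n := Fin.cast hlen k
    have hgk : l.get k = (π k' : ℕ) := get_ofFn_cast (fun i => (π i : ℕ)) hlen k'
    have hgi : l.get i = (π i' : ℕ) := get_ofFn_cast (fun i => (π i : ℕ)) hlen i'
    have hgj : l.get j = (π j' : ℕ) := get_ofFn_cast (fun i => (π i : ℕ)) hlen j'
    have hv1 : (π k' : ℕ) < (π i' : ℕ) := by rw [← hgk, ← hgi]; exact h1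
    have hv2 : (π i' : ℕ) < (π j' : ℕ) := by rw [← hgi, ← hgj]; exact h2
    have hv3 : (π k' : ℕ) < (π j' : ℕ) := hv1.trans hv2
    refine ⟨![i', j', k'], ?_, ?_⟩
    · intro a b hab
      fin_cases a <;> fin_cases b <;>
        first
          | exact absurd hab (by decide)
          | exact hij
          | exact hjk
          | exact hij.trans hjk
    · intro a b
      fin_cases a <;> fin_cases b <;>
        · simp only [perm231, Equiv.coe_fn_mk, Fin.lt_def, Fin.isValue,
            Matrix.cons_val_zero, Matrix.cons_val_one, Matrix.head_cons,
            Matrix.cons_val_two, Matrix.tail_cons, Fin.val_zero, Fin.val_one, Fin.val_two]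
          first
            | (norm_num; omega)
            | norm_num
            | omega

lemma get_ofFn_nat {n : ℕ} (g : Fin n → ℕ) (j : ℕ) (h : j < (List.ofFn g).length)
    (h' : j < n) : (List.ofFn g).get ⟨j, h⟩ = g ⟨j, h'⟩ := by
  rw [List.get_ofFn]
  congr 1

lemma lbdes_eq_card : ∀ l : List ℕ, lbdes l = ((Finset.range l.length).filter fun k =>
    ∃ hk : k + 1 < l.length, l.get ⟨k + 1, hk⟩ + 1 < l.get ⟨k, Nat.lt_of_succ_lt hk⟩).card
  | [] => by simp [lbdes]
  | x :: t => by
    have IH := lbdes_eq_card t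
    rw [Finset.card_filter]
    have hgoal : (∑ i ∈ Finset.range (x :: t).length,
        if (∃ hk : i + 1 < (x :: t).length, (x :: t).get ⟨i + 1, hk⟩ + 1
          < (x :: t).get ⟨i, Nat.lt_of_succ_lt hk⟩) then 1 else 0)
        = ∑ i ∈ Finset.range (t.length + 1),
        (if (∃ hk : i + 1 < t.length + 1, (x :: t).get ⟨i + 1, hk⟩ + 1
          < (x :: t).get ⟨i, Nat.lt_of_succ_lt hk⟩) then 1 else 0) := rfl
    rw [hgoal, Finset.sum_range_succ']
    have hstep : ∀ k ∈ Finset.range t.length,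
        (if (∃ hk : k + 1 + 1 < t.length + 1, (x :: t).get ⟨k + 1 + 1, hk⟩ + 1
            < (x :: t).get ⟨k + 1, Nat.lt_of_succ_lt hk⟩) then 1 else 0)
        = if (∃ hk : k + 1 < t.length, t.get ⟨k + 1, hk⟩ + 1
            < t.get ⟨k, Nat.lt_of_succ_lt hk⟩) then 1 else 0 := by
      intro k _
      congr 1
      apply propext
      constructor
      · rintro ⟨hk, h⟩
        exact ⟨by omega, h⟩
      · rintro ⟨hk, h⟩
        exact ⟨by omega, h⟩
    rw [Finset.sum_congr rfl hstep]
    have hsum : (∑ k ∈ Finset.range t.length,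
        if (∃ hk : k + 1 < t.length, t.get ⟨k + 1, hk⟩ + 1
          < t.get ⟨k, Nat.lt_of_succ_lt hk⟩) then 1 else 0) = lbdes t := by
      rw [← Finset.card_filter]
      exact IH.symm
    rw [hsum]
    cases t with
    | nil =>
      rw [if_neg]
      · simp [lbdes_nil, lbdes_singleton]
      · rintro ⟨hk, -⟩
        simp at hk
    | cons y t' =>
      have hif : (if (∃ hk : 0 + 1 < (y :: t').length + 1, (x :: y :: t').get ⟨0 + 1, hk⟩ + 1
          < (x :: y :: t').get ⟨0, Nat.lt_of_succ_lt hk⟩) then 1 else 0)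
          = if y + 1 < x then 1 else 0 := by
        congr 1
        apply propext
        constructor
        · rintro ⟨hk, h⟩
          exact h
        · intro h
          refine ⟨?_, h⟩
          simp
      rw [hif, lbdes_cons_cons]
      exact Nat.add_comm _ _

lemma bdes_eq {n : ℕ} (π : Equiv.Perm (Fin n)) :
    bdes π = lbdes (List.ofFn (fun i => (π i : ℕ))) := by
  have hlen : (List.ofFn (fun i => (π i : ℕ))).length = n := by simp
  rw [bdes, lbdes_eq_card, Finset.card_filter, Finset.card_filter]
  apply Finset.sum_congr (by rw [hlen])
  intro i hi
  have hi' : i < n := by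
    rw [Finset.mem_range, hlen] at hi
    exact hi
  congr 1
  apply propext
  constructor
  · rintro ⟨hk, hlt⟩
    refine ⟨by omega, ?_⟩
    rw [get_ofFn_nat (fun i => (π i : ℕ)) (i + 1) (by omega) hk,
      get_ofFn_nat (fun i => (π i : ℕ)) i (by omega) (Nat.lt_of_succ_lt hk)]
    exact hlt
  · rintro ⟨hk, hlt⟩
    have hk' : i + 1 < n := by omega
    rw [get_ofFn_nat (fun i => (π i : ℕ)) (i + 1) (by omega) hk',
      get_ofFn_nat (fun i => (π i : ℕ)) i (by omega) (Nat.lt_of_succ_lt hk')] at hlt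
    exact ⟨hk', hlt⟩

lemma natCard_eq_Bf (n k : ℕ) :
    Nat.card {π : Equiv.Perm (Fin n) // Avoids π perm231 ∧ bdes π = k} = Bf n k := by
  classical
  rw [Nat.card_eq_fintype_card, Fintype.card_subtype, Bf]
  apply Finset.card_bij (fun π _ => List.ofFn (fun i => (π i : ℕ)))
  · intro π hπ
    rw [Finset.mem_filter] at hπ
    obtain ⟨-, hAv, hb⟩ := hπ
    rw [Finset.mem_filter]
    exact ⟨ofFn_mem_lperm π, (avoids_iff π).1 hAv, by rw [← bdes_eq]; exact hb⟩
  · intro π hπ π' hπ' heq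
    have hfun := List.ofFn_inj.1 heq
    ext i
    exact congrFun hfun i
  · intro l hl
    rw [Finset.mem_filter] at hl
    obtain ⟨hl1, hAv, hb⟩ := hl
    have hlen : l.length = n := length_of_mem_lperm hl1
    have hget : ∀ i : Fin n, l.get (Fin.cast hlen.symm i) < n := by
      intro i
      have : l.get (Fin.cast hlen.symm i) ∈ l := l.get_mem _
      exact (mem_iff_lt_of_mem_lperm hl1).1 this
    set g : Fin n → Fin n := fun i => ⟨l.get (Fin.cast hlen.symm i), hget i⟩ with hg
    have hginj : Function.Injective g := by
      intro i j hij
      have h1 : l.get (Fin.cast hlen.symm i) = l.get (Fin.cast hlen.symm j) := by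
        have := congrArg Fin.val hij
        simpa [hg] using this
      have h2 := List.nodup_iff_injective_get.1 (nodup_of_mem_lperm hl1) h1
      have := congrArg Fin.val h2
      simp at this
      exact Fin.ext this
    have hgbij : Function.Bijective g := (Finite.injective_iff_bijective).1 hginj
    set π : Equiv.Perm (Fin n) := Equiv.ofBijective g hgbij with hπ
    have hofn : List.ofFn (fun i => (π i : ℕ)) = l := by
      apply List.ext_get (by simp [hlen])
      intro idx h1 h2
      rw [get_ofFn']
      show (g ⟨idx, by simpa using h1⟩ : ℕ) = _
      simp only [hg]
      congr 1
    refine ⟨π, ?_, hofn⟩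
    rw [Finset.mem_filter]
    refine ⟨Finset.mem_univ π, ?_, ?_⟩
    · rw [avoids_iff, hofn]
      exact hAv
    · rw [bdes_eq, hofn]
      exact hb

end BD231

/-- For `n ≥ 2k+1`, the number of 231-avoiding permutations of length `n` with exactly `k`
big descents is `(2^(n-2k-1)/(k+1)) * C(n-1,2k) * C(2k,k)`. -/
theorem card_avoids231_bdes (n k : ℕ) (hn : 2 * k + 1 ≤ n) :
    (k + 1) * Nat.card {π : Equiv.Perm (Fin n) // Avoids π perm231 ∧ bdes π = k} =
    2 ^ (n - 2 * k - 1) * Nat.choose (n - 1) (2 * k) * Nat.choose (2 * k) k := by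
  rw [BD231.natCard_eq_Bf, BD231.Bf_eq_fN, BD231.fN]
  have h1 := succ_mul_catalan_eq_centralBinom k
  have hcb : Nat.centralBinom k = Nat.choose (2 * k) k := rfl
  calc (k + 1) * (2 ^ (n - 2 * k - 1) * Nat.choose (n - 1) (2 * k) * catalan k)
      = 2 ^ (n - 2 * k - 1) * Nat.choose (n - 1) (2 * k) * ((k + 1) * catalan k) := by ring
    _ = _ := by rw [h1, hcb]
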